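/- Let X and N be independent real random variables, X distributed as the centered Gaussian law G(0, σ_X²) with σ_X > 0, and N distributed as the Gaussian mixture Σ_{l=0}^L β_l·G(0, σ_{N,l}²) with weights β_l ≥ 0 summing to 1 and σ_{N,l} > 0. Let g : ℝ → ℝ be continuously differentiable such that g(X+N)·X is integrable, g′ is integrable with respect to each G(0, σ_X² + σ_{N,l}²), and y ↦ g(y)·exp(−y²/(2(σ_X² + σ_{N,l}²))) tends to 0 as y → ±∞ for each l. Then E[X·g(X + N)] = σ_X²·Σ_{l=0}^L β_l·∫ g′(y) dG(0, σ_X² + σ_{N,l}²)(y). -/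

import Mathlib

open MeasureTheory ProbabilityTheory Filter Real
open scoped NNReal ENNReal

lemma gpdf_toNNReal (v : ℝ≥0) :
    gaussianPDF 0 v = fun x => ((gaussianPDFReal 0 v x).toNNReal : ℝ≥0∞) := rfl

lemma integral_gaussianReal_eq {v : ℝ≥0} (hv : v ≠ 0) (f : ℝ → ℝ) :
    ∫ x, f x ∂(gaussianReal 0 v) = ∫ x, gaussianPDFReal 0 v x * f x := by
  rw [gaussianReal_of_var_ne_zero 0 hv, gpdf_toNNReal,
    integral_withDensity_eq_integral_smul
      ((measurable_gaussianPDFReal 0 v).real_toNNReal) f]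
  refine integral_congr_ae (Filter.Eventually.of_forall fun x => ?_)
  simp [NNReal.smul_def, Real.coe_toNNReal _ (gaussianPDFReal_nonneg 0 v x)]

lemma integrable_gaussianReal_iff {v : ℝ≥0} (hv : v ≠ 0) (f : ℝ → ℝ) :
    Integrable f (gaussianReal 0 v) ↔
      Integrable (fun x => gaussianPDFReal 0 v x * f x) volume := by
  rw [gaussianReal_of_var_ne_zero 0 hv, gpdf_toNNReal,
    integrable_withDensity_iff_integrable_smul
      ((measurable_gaussianPDFReal 0 v).real_toNNReal)]
  refine integrable_congr (Filter.Eventually.of_forall fun x => ?_)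
  simp [NNReal.smul_def, Real.coe_toNNReal _ (gaussianPDFReal_nonneg 0 v x)]

lemma integrable_mul_exp_of_gaussian {v : ℝ≥0} (hv : v ≠ 0) {f : ℝ → ℝ}
    (h : Integrable f (gaussianReal 0 v)) :
    Integrable (fun x => f x * rexp (-(x ^ 2) / (2 * v))) volume := by
  have h2 := ((integrable_gaussianReal_iff hv f).mp h).const_mul (√(2 * π * v))
  refine h2.congr (Filter.Eventually.of_forall fun x => ?_)
  have hvpos : (0:ℝ) < v := by positivity
  have hc : (0:ℝ) < √(2 * π * v) := Real.sqrt_pos.mpr (by positivity)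
  simp only [gaussianPDFReal, sub_zero]
  field_simp

lemma stein {v : ℝ≥0} (hv : v ≠ 0) {f : ℝ → ℝ} (hf : ContDiff ℝ 1 f)
    (hint : Integrable (fun x => x * f x) (gaussianReal 0 v))
    (hder : Integrable (deriv f) (gaussianReal 0 v))
    (ht : Tendsto (fun x => f x * rexp (-(x ^ 2) / (2 * v))) atTop (nhds 0))
    (hb : Tendsto (fun x => f x * rexp (-(x ^ 2) / (2 * v))) atBot (nhds 0)) :
    ∫ x, x * f x ∂(gaussianReal 0 v)
      = (v : ℝ) * ∫ x, deriv f x ∂(gaussianReal 0 v) := by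
  have hvpos : (0:ℝ) < v := by positivity
  set E : ℝ → ℝ := fun x => rexp (-(x ^ 2) / (2 * v)) with hE
  set F : ℝ → ℝ := fun x => f x * E x with hF
  set F' : ℝ → ℝ := fun x => deriv f x * E x + f x * (E x * (-x / v)) with hF'
  have hFderiv : ∀ x, HasDerivAt F (F' x) x := by
    intro x
    have h1 : HasDerivAt f (deriv f x) x := (hf.differentiable one_ne_zero x).hasDerivAt
    have h2 : HasDerivAt (fun y : ℝ => -(y ^ 2) / (2 * v)) (-x / v) x := by
      have := (((hasDerivAt_pow 2 x).neg).div_const (2 * (v:ℝ)))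
      refine this.congr_deriv ?_
      field_simp
      ring
    have h3 : HasDerivAt E (E x * (-x / v)) x := h2.exp
    exact h1.mul h3
  have hI1 : Integrable (fun x => deriv f x * E x) volume :=
    integrable_mul_exp_of_gaussian hv hder
  have hI2' : Integrable (fun x => (x * f x) * E x) volume :=
    integrable_mul_exp_of_gaussian hv hint
  have hI2 : Integrable (fun x => f x * (E x * (-x / v))) volume := by
    refine ((hI2'.const_mul ((v:ℝ)⁻¹)).neg).congr
      (Filter.Eventually.of_forall fun x => ?_)
    simp only [Pi.neg_apply, neg_div, div_eq_mul_inv]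
    ring
  have hIF' : Integrable F' volume := hI1.add hI2
  have key : ∫ x, F' x = 0 := by
    have hIoi : ∫ x in Set.Ioi (0:ℝ), F' x = 0 - F 0 :=
      integral_Ioi_of_hasDerivAt_of_tendsto' (fun x _ => hFderiv x)
        hIF'.integrableOn ht
    have hIic : ∫ x in Set.Iic (0:ℝ), F' x = F 0 - 0 :=
      integral_Iic_of_hasDerivAt_of_tendsto' (fun x _ => hFderiv x)
        hIF'.integrableOn hb
    rw [← intervalIntegral.integral_Iic_add_Ioi hIF'.integrableOn hIF'.integrableOn, hIoi, hIic]
    ring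
  have key2 : ∫ x, deriv f x * E x = (v:ℝ)⁻¹ * ∫ x, (x * f x) * E x := by
    rw [integral_add hI1 hI2] at key
    have h4 : ∫ x, f x * (E x * (-x / v)) = -((v:ℝ)⁻¹ * ∫ x, (x * f x) * E x) := by
      rw [← integral_const_mul, ← integral_neg]
      refine integral_congr_ae (Filter.Eventually.of_forall fun x => ?_)
      simp only [neg_div, div_eq_mul_inv]
      ring
    rw [h4] at key
    linarith
  rw [integral_gaussianReal_eq hv, integral_gaussianReal_eq hv]
  have hpdf : ∀ x, gaussianPDFReal 0 v x = (√(2 * π * v))⁻¹ * E x := by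
    intro x; simp [gaussianPDFReal, hE, sub_zero]
  calc ∫ x, gaussianPDFReal 0 v x * (x * f x)
      = (√(2 * π * v))⁻¹ * ∫ x, (x * f x) * E x := by
        rw [← integral_const_mul]
        exact integral_congr_ae (Filter.Eventually.of_forall fun x => by
          simp only [hpdf]; ring)
    _ = (v:ℝ) * ((√(2 * π * v))⁻¹ * ∫ x, deriv f x * E x) := by
        rw [key2]; field_simp
    _ = (v:ℝ) * ∫ x, gaussianPDFReal 0 v x * deriv f x := by
        congr 1
        rw [← integral_const_mul]
        exact integral_congr_ae (Filter.Eventually.of_forall fun x => by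
          simp only [hpdf]; ring)

lemma gaussianPDFReal_conv {v1 v2 : ℝ≥0} (h1 : v1 ≠ 0) (h2 : v2 ≠ 0) (y : ℝ) :
    ∫ x, gaussianPDFReal 0 v2 (y - x) * gaussianPDFReal 0 v1 x
      = gaussianPDFReal 0 (v1 + v2) y := by
  have hv1 : (0:ℝ) < v1 := by positivity
  have hv2 : (0:ℝ) < v2 := by positivity
  have hV : (0:ℝ) < (v1:ℝ) + v2 := by linarith
  set w : ℝ≥0 := v1 * v2 / (v1 + v2) with hw
  have hwpos : (0:ℝ) < w := by
    rw [hw]; push_cast; positivity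
  have hwR : (w:ℝ) = (v1:ℝ) * v2 / ((v1:ℝ) + v2) := by rw [hw]; push_cast; ring
  set a : ℝ := (v1:ℝ) * y / ((v1:ℝ) + v2) with ha
  have hpt : ∀ x, gaussianPDFReal 0 v2 (y - x) * gaussianPDFReal 0 v1 x
      = gaussianPDFReal 0 (v1 + v2) y * gaussianPDFReal a w x := by
    intro x
    simp only [gaussianPDFReal, sub_zero]
    rw [mul_mul_mul_comm, ← Real.exp_add, mul_mul_mul_comm, ← Real.exp_add]
    congr 1
    · rw [← mul_inv, ← mul_inv, ← Real.sqrt_mul (by positivity),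
        ← Real.sqrt_mul (by positivity)]
      congr 1
      rw [hwR]; push_cast
      field_simp
    · congr 1
      rw [hwR, ha]; push_cast
      have hVne : ((v1:ℝ) + v2) ≠ 0 := ne_of_gt hV
      field_simp
      ring
  rw [integral_congr_ae (Filter.Eventually.of_forall hpt), integral_const_mul,
    integral_gaussianPDFReal_eq_one a (by
      simp only [ne_eq, ← NNReal.coe_eq_zero] at *
      exact ne_of_gt hwpos), mul_one]

lemma gaussianReal_conv {v1 v2 : ℝ≥0} (h1 : v1 ≠ 0) (h2 : v2 ≠ 0) :
    Measure.map (fun p : ℝ × ℝ => p.1 + p.2)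
      ((gaussianReal 0 v1).prod (gaussianReal 0 v2)) = gaussianReal 0 (v1 + v2) := by
  have hV : v1 + v2 ≠ 0 := by
    simp only [ne_eq, ← NNReal.coe_eq_zero] at *
    push_cast
    positivity
  ext s hs
  rw [Measure.map_apply (f := fun p : ℝ × ℝ => p.1 + p.2) (measurable_fst.add measurable_snd) hs,
    Measure.prod_apply (s := (fun p : ℝ × ℝ => p.1 + p.2) ⁻¹' s) ((measurable_fst.add measurable_snd) hs)]
  have hstep : ∀ x : ℝ, (gaussianReal 0 v2) (Prod.mk x ⁻¹' ((fun p : ℝ × ℝ => p.1 + p.2) ⁻¹' s))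
      = ∫⁻ y in s, gaussianPDF x v2 y := by
    intro x
    have hpre : Prod.mk x ⁻¹' ((fun p : ℝ × ℝ => p.1 + p.2) ⁻¹' s)
        = (fun n => x + n) ⁻¹' s := rfl
    rw [hpre, ← Measure.map_apply (measurable_const_add x) hs,
      gaussianReal_map_const_add x, zero_add, gaussianReal_apply x h2 s]
  simp_rw [hstep]
  rw [gaussianReal_of_var_ne_zero 0 h1,
    lintegral_withDensity_eq_lintegral_mul _ (measurable_gaussianPDF 0 v1) ?hmeas]
  case hmeas =>
    apply Measurable.lintegral_prod_right (f := fun x y => gaussianPDF x v2 y)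
    apply Measurable.ennreal_ofReal
    have : ∀ p : ℝ × ℝ, gaussianPDFReal p.1 v2 p.2
        = (√(2 * π * v2))⁻¹ * rexp (-(p.2 - p.1) ^ 2 / (2 * v2)) := fun p => rfl
    simp_rw [this]
    fun_prop
  have hpdfm : Measurable (fun p : ℝ × ℝ => gaussianPDF 0 v1 p.1 * gaussianPDF p.1 v2 p.2) := by
    refine Measurable.mul (f := fun p : ℝ × ℝ => gaussianPDF 0 v1 p.1) (g := fun p => gaussianPDF p.1 v2 p.2) ?_ ?_
    · exact (measurable_gaussianPDF 0 v1).comp measurable_fst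
    · apply Measurable.ennreal_ofReal
      have : ∀ p : ℝ × ℝ, gaussianPDFReal p.1 v2 p.2
          = (√(2 * π * v2))⁻¹ * rexp (-(p.2 - p.1) ^ 2 / (2 * v2)) := fun p => rfl
      simp_rw [this]
      fun_prop
  calc ∫⁻ x, gaussianPDF 0 v1 x * ∫⁻ y in s, gaussianPDF x v2 y
      = ∫⁻ x, ∫⁻ y in s, gaussianPDF 0 v1 x * gaussianPDF x v2 y := by
        refine lintegral_congr fun x => ?_
        have hne : gaussianPDF 0 v1 x ≠ ⊤ := by rw [gaussianPDF]; exact ENNReal.ofReal_ne_top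
        rw [lintegral_const_mul' _ _ hne]
    _ = ∫⁻ y in s, ∫⁻ x, gaussianPDF 0 v1 x * gaussianPDF x v2 y := by
        exact lintegral_lintegral_swap (hpdfm.aemeasurable)
    _ = ∫⁻ y in s, gaussianPDF 0 (v1 + v2) y := by
        refine setLIntegral_congr_fun hs (fun y _ => ?_)
        have hptw : ∀ x : ℝ, gaussianPDF 0 v1 x * gaussianPDF x v2 y
            = ENNReal.ofReal (gaussianPDFReal 0 v2 (y - x) * gaussianPDFReal 0 v1 x) := by
          intro x
          rw [gaussianPDF, gaussianPDF, ← ENNReal.ofReal_mul (gaussianPDFReal_nonneg 0 v1 x)]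
          rw [mul_comm]
          congr 2
          simp [gaussianPDFReal]
        simp_rw [hptw]
        have hint : Integrable (fun x => gaussianPDFReal 0 v2 (y - x) * gaussianPDFReal 0 v1 x)
            volume := by
          refine (integrable_gaussianPDFReal 0 v1).bdd_mul (c := (√(2 * π * v2))⁻¹) ?_ (Filter.Eventually.of_forall fun x => ?_)
          · exact ((measurable_gaussianPDFReal 0 v2).comp (measurable_const.sub measurable_id)).aestronglyMeasurable
          · rw [Real.norm_of_nonneg (gaussianPDFReal_nonneg 0 v2 _)]
            simp only [gaussianPDFReal, sub_zero]
            have h1le : rexp (-(y - x) ^ 2 / (2 * v2)) ≤ 1 := by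
              apply Real.exp_le_one_iff.mpr
              exact div_nonpos_of_nonpos_of_nonneg (neg_nonpos.mpr (sq_nonneg _))
                (by positivity)
            calc (√(2 * π * v2))⁻¹ * rexp (-(y - x) ^ 2 / (2 * v2))
                ≤ (√(2 * π * v2))⁻¹ * 1 := by
                  apply mul_le_mul_of_nonneg_left h1le (by positivity)
              _ = (√(2 * π * v2))⁻¹ := mul_one _
        rw [← ofReal_integral_eq_lintegral_ofReal hint
          (Filter.Eventually.of_forall fun x => mul_nonneg (gaussianPDFReal_nonneg 0 v2 _)
            (gaussianPDFReal_nonneg 0 v1 x)),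
          gaussianPDFReal_conv h1 h2 y]
        rfl
    _ = gaussianReal 0 (v1 + v2) s := (gaussianReal_apply 0 hV s).symm

lemma tail_transfer {v V : ℝ≥0} (hv : v ≠ 0) (hV : V ≠ 0) (hvV : (v:ℝ) < V)
    (g : ℝ → ℝ) (n : ℝ)
    (ht : Tendsto (fun y => g y * rexp (-(y ^ 2) / (2 * V))) atTop (nhds 0))
    (hb : Tendsto (fun y => g y * rexp (-(y ^ 2) / (2 * V))) atBot (nhds 0)) :
    Tendsto (fun x => g (x + n) * rexp (-(x ^ 2) / (2 * v))) atTop (nhds 0)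
    ∧ Tendsto (fun x => g (x + n) * rexp (-(x ^ 2) / (2 * v))) atBot (nhds 0) := by
  have hvpos : (0:ℝ) < v := by positivity
  have hVpos : (0:ℝ) < V := by positivity
  set c2 : ℝ := 1 / (2 * V) - 1 / (2 * v) with hc2def
  set c1 : ℝ := n / V with hc1def
  set c0 : ℝ := n ^ 2 / (2 * V) with hc0def
  have hc2 : c2 < 0 := by
    rw [hc2def, sub_neg]
    apply one_div_lt_one_div_of_lt (by positivity) (by linarith)
  have hsplit : ∀ x : ℝ, g (x + n) * rexp (-(x ^ 2) / (2 * v))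
      = (g (x + n) * rexp (-((x + n) ^ 2) / (2 * V)))
        * rexp (x * (c2 * x + c1) + c0) := by
    intro x
    rw [mul_assoc, ← Real.exp_add]
    congr 2
    rw [hc2def, hc1def, hc0def]
    field_simp
    ring
  have hA1 : Tendsto (fun x : ℝ => g (x + n) * rexp (-((x + n) ^ 2) / (2 * V)))
      atTop (nhds 0) := ht.comp (tendsto_atTop_add_const_right atTop n tendsto_id)
  have hA2 : Tendsto (fun x : ℝ => g (x + n) * rexp (-((x + n) ^ 2) / (2 * V)))
      atBot (nhds 0) := hb.comp (tendsto_atBot_add_const_right atBot n tendsto_id)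
  have hB1 : Tendsto (fun x : ℝ => rexp (x * (c2 * x + c1) + c0)) atTop (nhds 0) := by
    refine Real.tendsto_exp_atBot.comp ?_
    apply tendsto_atBot_add_const_right
    exact tendsto_id.atTop_mul_atBot₀
      (tendsto_atBot_add_const_right _ c1 (tendsto_id.const_mul_atTop_of_neg hc2))
  have hB2 : Tendsto (fun x : ℝ => rexp (x * (c2 * x + c1) + c0)) atBot (nhds 0) := by
    refine Real.tendsto_exp_atBot.comp ?_
    apply tendsto_atBot_add_const_right
    exact tendsto_id.atBot_mul_atTop₀
      (tendsto_atTop_add_const_right _ c1 (tendsto_id.const_mul_atBot_of_neg hc2))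
  constructor
  · refine Tendsto.congr (fun x => (hsplit x).symm) ?_
    simpa using hA1.mul hB1
  · refine Tendsto.congr (fun x => (hsplit x).symm) ?_
    simpa using hA2.mul hB2
lemma prod_smul_right' (μ : Measure ℝ) (ν : Measure ℝ) [SFinite μ] [SFinite ν] (c : ℝ≥0∞)
    (hc : c ≠ ⊤) : μ.prod (c • ν) = c • μ.prod ν := by
  ext s hs
  rw [Measure.prod_apply hs, Measure.smul_apply, Measure.prod_apply hs]
  simp only [Measure.smul_apply, smul_eq_mul]
  rw [lintegral_const_mul' _ _ hc]

lemma prod_finset_sum' (μ : Measure ℝ) [SFinite μ] (s : Finset ℕ) (ν : ℕ → Measure ℝ)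
    [∀ i, IsFiniteMeasure (ν i)] :
    μ.prod (∑ i ∈ s, ν i) = ∑ i ∈ s, μ.prod (ν i) := by
  classical
  induction s using Finset.induction_on with
  | empty => simp
  | insert a s' h ih =>
      rw [Finset.sum_insert h, Finset.sum_insert h, Measure.prod_add, ih]

/-- Stein-type identity for Gaussian-mixture noise: if `X ~ G(0, vX)` and `N` is
an independent zero-mean Gaussian mixture, then for a C¹ nonlinearity `g` with
vanishing Gaussian tails, `E[X·g(X+N)] = vX·Σ_l β_l·∫ g′ dG(0, vX + vN_l)`. -/
theorem mixture_stein_identity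
    {Ω : Type*} {mΩ : MeasurableSpace Ω} (μ : Measure Ω) [IsProbabilityMeasure μ]
    (X N : Ω → ℝ) (hXmeas : Measurable X) (hNmeas : Measurable N)
    (hindep : IndepFun X N μ)
    (vX : NNReal) (hvX : 0 < vX)
    (L : ℕ) (β : ℕ → NNReal) (hβ : ∑ l ∈ Finset.range (L + 1), β l = 1)
    (vN : ℕ → NNReal) (hvN : ∀ l ∈ Finset.range (L + 1), 0 < vN l)
    (hX : μ.map X = gaussianReal 0 vX)
    (hN : μ.map N = ∑ l ∈ Finset.range (L + 1), β l • gaussianReal 0 (vN l))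
    (g : ℝ → ℝ) (hg : ContDiff ℝ 1 g)
    (hgX : Integrable (fun ω => g (X ω + N ω) * X ω) μ)
    (hg' : ∀ l ∈ Finset.range (L + 1),
      Integrable (deriv g) (gaussianReal 0 (vX + vN l)))
    (htail : ∀ l ∈ Finset.range (L + 1),
      Tendsto (fun y => g y * Real.exp (-(y ^ 2) / (2 * ((vX : ℝ) + (vN l : ℝ)))))
        atTop (nhds 0)
      ∧ Tendsto (fun y => g y * Real.exp (-(y ^ 2) / (2 * ((vX : ℝ) + (vN l : ℝ)))))
        atBot (nhds 0)) :
    (∫ ω, X ω * g (X ω + N ω) ∂μ)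
      = (vX : ℝ) * ∑ l ∈ Finset.range (L + 1),
          (β l : ℝ) * ∫ y, deriv g y ∂(gaussianReal 0 (vX + vN l)) := by
  classical
  have hvXne : vX ≠ 0 := hvX.ne'
  set P : Measure ℝ := gaussianReal 0 vX with hP
  set ν : ℕ → Measure ℝ := fun l => gaussianReal 0 (vN l) with hν
  set G : ℕ → Measure ℝ := fun l => gaussianReal 0 (vX + vN l) with hG
  set μN : Measure ℝ := μ.map N with hμN
  haveI : IsProbabilityMeasure μN := Measure.isProbabilityMeasure_map hNmeas.aemeasurable
  set φ : ℝ × ℝ → ℝ := fun p => p.1 * g (p.1 + p.2) with hφ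
  have hgc : Continuous g := hg.continuous
  have hg'c : Continuous (deriv g) := hg.continuous_deriv le_rfl
  have hφc : Continuous φ := continuous_fst.mul (hgc.comp (continuous_fst.add continuous_snd))
  have hXN : AEMeasurable (fun ω => (X ω, N ω)) μ := (hXmeas.prodMk hNmeas).aemeasurable
  -- joint law
  have hmap : μ.map (fun ω => (X ω, N ω)) = P.prod μN := by
    rw [← hX, hμN]
    exact (ProbabilityTheory.indepFun_iff_map_prod_eq_prod_map_map hXmeas.aemeasurable
      hNmeas.aemeasurable).mp hindep
  -- integrability of φ on the product
  have hInt0 : Integrable φ (P.prod μN) := by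
    rw [← hmap]
    refine (integrable_map_measure (hφc.aestronglyMeasurable) hXN).mpr ?_
    simpa [hφ, Function.comp_def, mul_comm] using hgX
  -- first reduction
  have hstep1 : (∫ ω, X ω * g (X ω + N ω) ∂μ) = ∫ n, ∫ x, x * g (x + n) ∂P ∂μN := by
    rw [← MeasureTheory.integral_prod_symm φ hInt0, ← hmap,
      integral_map hXN hφc.aestronglyMeasurable]
  set F : ℝ → ℝ := fun n => ∫ x, x * g (x + n) ∂P with hF
  have hFint : Integrable F μN := by
    have := hInt0.swap.integral_prod_left
    simpa [hφ, Function.comp] using this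
  -- split the mixture
  have hcomp_le : ∀ l ∈ Finset.range (L + 1), (β l • ν l : Measure ℝ) ≤ μN := by
    intro l hl
    rw [hN]
    rw [← Finset.add_sum_erase _ (fun k => (β k • gaussianReal 0 (vN k) : Measure ℝ)) hl]
    exact Measure.le_add_right le_rfl
  have hsplit : ∫ n, F n ∂μN
      = ∑ l ∈ Finset.range (L + 1), (β l : ℝ) * ∫ n, F n ∂(ν l) := by
    rw [hN, integral_finset_sum_measure
      (fun l hl => hFint.mono_measure (hcomp_le l hl))]
    refine Finset.sum_congr rfl fun l hl => ?_
    rw [integral_smul_nnreal_measure]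
    simp [NNReal.smul_def]
  rw [hstep1, hsplit, Finset.mul_sum]
  refine Finset.sum_congr rfl fun l hl => ?_
  by_cases hβ0 : β l = 0
  · simp [hβ0]
  · have hVl : vN l ≠ 0 := (hvN l hl).ne'
    have hVXl : vX + vN l ≠ 0 := (add_pos hvX (hvN l hl)).ne'
    have hconv : Measure.map (fun p : ℝ × ℝ => p.1 + p.2) (P.prod (ν l)) = G l :=
      gaussianReal_conv hvXne hVl
    have haddm : AEMeasurable (fun p : ℝ × ℝ => p.1 + p.2) (P.prod (ν l)) :=
      (measurable_fst.add measurable_snd).aemeasurable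
    have hIdl : Integrable (fun p : ℝ × ℝ => deriv g (p.1 + p.2)) (P.prod (ν l)) := by
      have h := hg' l hl
      have h2 : Integrable (deriv g) (G l) := h
      rw [← hconv] at h2
      exact (integrable_map_measure hg'c.aestronglyMeasurable haddm).mp h2
    have hIφl : Integrable φ (P.prod (ν l)) := by
      have hprodsum : P.prod μN
          = ∑ k ∈ Finset.range (L + 1), P.prod (β k • gaussianReal 0 (vN k)) := by
        rw [hN]
        exact prod_finset_sum' P _ _
      have h2 : Integrable φ (P.prod (β l • ν l)) :=
        integrable_finset_sum_measure.mp (hprodsum ▸ hInt0) l hl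
      have h3 : P.prod (β l • ν l) = ((β l : ℝ≥0∞)) • P.prod (ν l) :=
        prod_smul_right' P (ν l) (β l : ℝ≥0∞) ENNReal.coe_ne_top
      rw [h3] at h2
      exact (integrable_smul_measure (by exact_mod_cast hβ0) ENNReal.coe_ne_top).mp h2
    have h1ae : ∀ᵐ n ∂(ν l), Integrable (fun x => x * g (x + n)) P := hIφl.prod_left_ae
    have h2ae : ∀ᵐ n ∂(ν l), Integrable (fun x => deriv g (x + n)) P := hIdl.prod_left_ae
    have hlt : (vX : ℝ) < ((vX + vN l : ℝ≥0) : ℝ) := by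
      push_cast
      have : (0:ℝ) < vN l := by exact_mod_cast hvN l hl
      linarith
    have htt := htail l hl
    have htt1 : Tendsto (fun y => g y * rexp (-(y ^ 2) / (2 * ((vX + vN l : ℝ≥0) : ℝ))))
        atTop (nhds 0) := by
      have := htt.1
      simpa [NNReal.coe_add] using this
    have htt2 : Tendsto (fun y => g y * rexp (-(y ^ 2) / (2 * ((vX + vN l : ℝ≥0) : ℝ))))
        atBot (nhds 0) := by
      have := htt.2
      simpa [NNReal.coe_add] using this
    have hsteinae : ∀ᵐ n ∂(ν l), F n = (vX : ℝ) * ∫ x, deriv g (x + n) ∂P := by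
      filter_upwards [h1ae, h2ae] with n hn1 hn2
      have hcomp : ContDiff ℝ 1 (fun x => g (x + n)) :=
        hg.comp (contDiff_id.add contDiff_const)
      have hd : deriv (fun x => g (x + n)) = fun x => deriv g (x + n) :=
        funext fun x => deriv_comp_add_const g n x
      have htransfer := tail_transfer hvXne hVXl hlt g n htt1 htt2
      have hs := stein hvXne hcomp hn1 (by rw [hd]; exact hn2) htransfer.1 htransfer.2
      rw [hd] at hs
      exact hs
    have hswap : ∫ n, ∫ x, deriv g (x + n) ∂P ∂(ν l) = ∫ y, deriv g y ∂(G l) := by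
      rw [← hconv, integral_map haddm hg'c.aestronglyMeasurable]
      exact (MeasureTheory.integral_prod_symm (fun p : ℝ × ℝ => deriv g (p.1 + p.2)) hIdl).symm
    calc (β l : ℝ) * ∫ n, F n ∂(ν l)
        = (β l : ℝ) * ((vX : ℝ) * ∫ n, ∫ x, deriv g (x + n) ∂P ∂(ν l)) := by
          rw [integral_congr_ae hsteinae, integral_const_mul]
      _ = (vX : ℝ) * ((β l : ℝ) * ∫ y, deriv g y ∂(G l)) := by
          rw [hswap]; ring
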